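/- For all m ≥ 0 and n ≥ 1, A^m(n) − 1 = F_m·A(n) + F_{m−1}·n − F_{m+1}, where A^m denotes the m-fold iterate of A(n) = ⌊nφ⌋ (with the convention F_{−1} = 1 when m = 0). -/

import Mathlib

noncomputable def phi : ℝ := (1 + Real.sqrt 5) / 2

/-- Lower Wythoff sequence. -/
noncomputable def A (n : ℕ) : ℕ := (⌊(n : ℝ) * phi⌋).toNat

/-- Upper Wythoff sequence. -/
noncomputable def B (n : ℕ) : ℕ := (⌊(n : ℝ) * phi ^ 2⌋).toNat

/-- `d` is the digit sequence of the Zeckendorf expansion of `N`: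
digits are 0/1, no two consecutive 1's, finitely many nonzero digits,
and `N = Σ dᵢ · F_{i+2}`. -/
def IsZeck (N : ℕ) (d : ℕ → ℕ) : Prop :=
  (∀ i, d i ≤ 1) ∧ (∀ i, ¬(d i = 1 ∧ d (i + 1) = 1)) ∧
  (Function.support d).Finite ∧ N = ∑ᶠ i, d i * Nat.fib (i + 2)

lemma sqrt5_lt : Real.sqrt 5 < 3 := by
  have : (5:ℝ) < 3^2 := by norm_num
  nlinarith [Real.sq_sqrt (by norm_num : (5:ℝ) ≥ 0), Real.sqrt_nonneg 5]

lemma phi_gt_one : 1 < phi := by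
  have : (1:ℝ) < Real.sqrt 5 := by
    have : (1:ℝ)^2 < 5 := by norm_num
    nlinarith [Real.sq_sqrt (by norm_num : (5:ℝ) ≥ 0), Real.sqrt_nonneg 5]
  unfold phi; linarith

lemma phi_lt_two : phi < 2 := by unfold phi; linarith [sqrt5_lt]

lemma phi_sq : phi^2 = phi + 1 := by
  unfold phi
  have : Real.sqrt 5 ^ 2 = 5 := Real.sq_sqrt (by norm_num)
  ring_nf
  nlinarith [this]

lemma irr_phi : Irrational phi := Real.goldenRatio_irrational

lemma A_ge (k : ℕ) : k ≤ A k := by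
  have h1 : (k:ℝ) ≤ (k:ℝ) * phi := by
    nlinarith [phi_gt_one, Nat.cast_nonneg (α := ℝ) k]
  have : (k:ℤ) ≤ ⌊(k:ℝ) * phi⌋ := by
    exact_mod_cast Int.le_floor.mpr (by exact_mod_cast h1)
  unfold A; omega

lemma A_cast (k : ℕ) : ((A k : ℤ)) = ⌊(k:ℝ) * phi⌋ := by
  have h1 : (0:ℤ) ≤ ⌊(k:ℝ) * phi⌋ := by
    apply Int.floor_nonneg.mpr
    nlinarith [phi_gt_one, Nat.cast_nonneg (α := ℝ) k]
  unfold A; omega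

lemma AA (k : ℕ) (hk : 1 ≤ k) : (A (A k) : ℤ) = A k + k - 1 := by
  have hirr : Irrational ((k:ℝ) * phi) := irr_phi.natCast_mul (by omega)
  set x : ℝ := (k:ℝ) * phi with hx
  have hf0 : 0 < Int.fract x := by
    rcases lt_or_eq_of_le (Int.fract_nonneg x) with h | h
    · exact h
    · exfalso
      have hxe : x = (⌊x⌋ : ℝ) := by linarith [Int.fract_add_floor x, h.symm]
      exact hirr.ne_int ⌊x⌋ hxe
  have hf1 : Int.fract x < 1 := Int.fract_lt_one x
  have hfl : (⌊x⌋ : ℝ) = x - Int.fract x := by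
    have := Int.fract_add_floor x; linarith
  have key : (⌊x⌋ : ℝ) * phi = (⌊x⌋ : ℝ) + k - Int.fract x * (phi - 1) := by
    have h2 : x * phi = x + k := by
      rw [hx]; nlinarith [phi_sq]
    rw [hfl]; nlinarith [h2, hfl]
  have hb : (0:ℝ) < Int.fract x * (phi - 1) := by nlinarith [phi_gt_one]
  have hb2 : Int.fract x * (phi - 1) < 1 := by nlinarith [phi_lt_two]
  have hfloor : ⌊(⌊x⌋ : ℝ) * phi⌋ = ⌊x⌋ + (k:ℤ) - 1 := by
    apply Int.floor_eq_iff.mpr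
    constructor
    · push_cast; linarith [key, hb2]
    · push_cast; linarith [key, hb]
  have hAk : ((A k : ℤ)) = ⌊x⌋ := A_cast k
  have : (A (A k) : ℤ) = ⌊((A k : ℕ) : ℝ) * phi⌋ := A_cast (A k)
  rw [this]
  have hcast : ((A k : ℕ) : ℝ) = ((⌊x⌋ : ℤ) : ℝ) := by exact_mod_cast congrArg (fun z : ℤ => (z:ℝ)) hAk
  rw [hcast, hfloor, hAk]

lemma iter_pos (n : ℕ) (hn : 1 ≤ n) : ∀ m, 1 ≤ A^[m] n := by
  intro m
  induction m with
  | zero => simpa using hn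
  | succ k ih =>
    rw [Function.iterate_succ_apply']
    exact le_trans ih (A_ge _)

lemma aux_lemma (n : ℕ) (hn : 1 ≤ n) : ∀ m,
    (A^[m] n : ℤ) - 1 = Nat.fib m * ((A n : ℤ) - 1)
      + ((Nat.fib (m+1) : ℤ) - Nat.fib m) * ((n:ℤ) - 1) := by
  intro m
  induction m using Nat.strong_induction_on with
  | _ m ih =>
    match m with
    | 0 => simp
    | 1 => simp
    | (k+2) =>
      have h1 := ih (k+1) (by omega)
      have h0 := ih k (by omega)
      have hpos := iter_pos n hn k
      have hstep : (A^[k+2] n : ℤ) = (A^[k+1] n : ℤ) + (A^[k] n : ℤ) - 1 := by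
        have e2 : A^[k+2] n = A (A (A^[k] n)) := by
          rw [Function.iterate_succ_apply', Function.iterate_succ_apply']
        have e1 : A^[k+1] n = A (A^[k] n) := by
          rw [Function.iterate_succ_apply']
        rw [e2, e1]
        exact AA _ hpos
      have f2 : (Nat.fib (k+2) : ℤ) = Nat.fib (k+1) + Nat.fib k := by
        rw [Nat.fib_add_two]; push_cast; ring
      have f3 : (Nat.fib (k+3) : ℤ) = Nat.fib (k+2) + Nat.fib (k+1) := by
        rw [show k+3 = (k+1)+2 by ring, Nat.fib_add_two]; push_cast; ring
      rw [hstep]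
      rw [f2, f3]
      linarith [h1, h0, f2]

/-- A^m(n) − 1 = F_m·A(n) + F_{m−1}·n − F_{m+1}, with the convention F_{−1}=1 when m=0. -/
theorem iterate_A_sub_one (m n : ℕ) (hn : 1 ≤ n) :
    (A^[m] n : ℤ) - 1 =
      Nat.fib m * (A n : ℤ) + (if m = 0 then 1 else (Nat.fib (m - 1) : ℤ)) * n
        - Nat.fib (m + 1) := by
  have h := aux_lemma n hn m
  match m with
  | 0 => simpa using h
  | (k+1) =>
    simp only [if_neg (Nat.succ_ne_zero k), Nat.add_sub_cancel]
    have f2 : (Nat.fib (k+2) : ℤ) = Nat.fib (k+1) + Nat.fib k := by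
      rw [Nat.fib_add_two]; push_cast; ring
    rw [h]
    have f2' : (Nat.fib (k+1+1) : ℤ) = Nat.fib (k+1) + Nat.fib k := f2
    rw [f2']
    ring
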